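/- Let d be the code distance of the polynomial remainder code with moduli m_1(x), …, m_L(x), set A = ⌊(d−1)/2⌋, let θ be an integer with 1 ≤ θ ≤ L − 2A, set B = ⌊(L−θ)/2⌋ − A, let η be a nonnegative integer with η < τ_{(θ)}, and assume A > B. Let a(x), b(x) ∈ F[x] with deg(a) < deg(M) and deg(b) < deg(M), and let r ∈ F^{L·m} be a vector that differs from the coefficient stream s(a) by at most B + ⌊(A−B)/2⌋ bursts of width η and differs from the coefficient stream s(b) by at most B + ⌊(A−B)/2⌋ bursts of width η. Then a(x) = b(x). (When A > B, the code corrects up to B + ⌊(A−B)/2⌋ bursts of width not more than η(θ).) -/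

import Mathlib

open Polynomial
open scoped Classical

/-- The code distance of the polynomial remainder code with moduli `m i`, `i ∈ s`. -/
noncomputable def codeDist {F : Type*} [Field F] {ι : Type*} (s : Finset ι)
    (m : ι → Polynomial F) : ℕ :=
  sInf {k | ∃ a : Polynomial F, a ≠ 0 ∧ a.degree < (s.lcm m).degree ∧
    (s.filter fun i => ¬ m i ∣ a).card = k}

/-- The `j`-th smallest element (1-indexed) of a multiset of natural numbers. -/
noncomputable def nthSmallest (s : Multiset ℕ) (j : ℕ) : ℕ :=
  (s.sort (· ≤ ·)).getD (j - 1) 0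

/-- The coefficient stream of `c`: position `i·mdeg + j` (0-indexed) carries the
coefficient of `x^j` in `[c]_{m_i}`, all moduli having degree `mdeg`. -/
noncomputable def stream {F : Type*} [Field F] {L : ℕ} (mdeg : ℕ)
    (m : Fin L → Polynomial F) (c : Polynomial F) (p : Fin (L * mdeg)) : F :=
  (c %ₘ m ⟨(p : ℕ) / mdeg,
    Nat.div_lt_of_lt_mul (lt_of_lt_of_le p.isLt (le_of_eq (Nat.mul_comm L mdeg)))⟩).coeff ((p : ℕ) % mdeg)

/-- `r` differs from `s` by at most `N` bursts of width `w`: the positions where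
they differ are covered by at most `N` blocks of `w` consecutive positions. -/
def DiffBursts {F : Type*} {n : ℕ} (r s : Fin n → F) (N w : ℕ) : Prop :=
  ∃ starts : Finset ℕ, starts.card ≤ N ∧
    ∀ p : Fin n, r p ≠ s p → ∃ t ∈ starts, t ≤ (p : ℕ) ∧ (p : ℕ) < t + w

/- ### Auxiliary lemmas -/

/-- A divisor of a nonzero polynomial of at least the same degree is associated to it. -/
lemma assoc_of_dvd_of_natDegree_le {F : Type*} [Field F] {g p : Polynomial F}
    (hdvd : g ∣ p) (hp : p ≠ 0) (hdeg : p.natDegree ≤ g.natDegree) : Associated g p := by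
  obtain ⟨q, rfl⟩ := hdvd
  have hg : g ≠ 0 := left_ne_zero_of_mul hp
  have hq : q ≠ 0 := right_ne_zero_of_mul hp
  have hnd : (g * q).natDegree = g.natDegree + q.natDegree := Polynomial.natDegree_mul hg hq
  have hq0 : q.natDegree = 0 := by omega
  have hqC : q = Polynomial.C (q.coeff 0) := Polynomial.eq_C_of_natDegree_eq_zero hq0
  have hu : IsUnit q := by
    rw [hqC]
    refine Polynomial.isUnit_C.2 (isUnit_iff_ne_zero.2 ?_)
    intro h0
    apply hq
    rw [hqC, h0, map_zero]
  exact ⟨hu.unit, by rw [IsUnit.unit_spec]⟩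

/-- gcd of two distinct monic polynomials of the same degree has strictly smaller degree. -/
lemma gcd_natDegree_lt {F : Type*} [Field F] {p q : Polynomial F}
    (hp : p.Monic) (hq : q.Monic) (hne : p ≠ q) (hdeg : p.natDegree = q.natDegree) :
    (gcd p q).natDegree < p.natDegree := by
  by_contra hcon
  push_neg at hcon
  have a1 : Associated (gcd p q) p :=
    assoc_of_dvd_of_natDegree_le (gcd_dvd_left p q) hp.ne_zero hcon
  have a2 : Associated (gcd p q) q :=
    assoc_of_dvd_of_natDegree_le (gcd_dvd_right p q) hq.ne_zero (hdeg ▸ hcon)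
  exact hne (Polynomial.eq_of_monic_of_associated hp hq (a1.symm.trans a2))

/-- In a sorted list, fewer than `θ` entries are strictly below the (θ-1)-indexed entry. -/
lemma filter_lt_nthSmallest_card_le (s : Multiset ℕ) (θ : ℕ) (hθ : 1 ≤ θ)
    (hlen : θ ≤ Multiset.card s) :
    Multiset.card (s.filter (fun x => x < nthSmallest s θ)) ≤ θ - 1 := by
  classical
  set l : List ℕ := s.sort (· ≤ ·) with hl
  have hslen : l.length = Multiset.card s := by rw [hl, Multiset.length_sort]
  have hidx : θ - 1 < l.length := by omega
  set v : ℕ := nthSmallest s θ with hv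
  have hvget : v = l.get ⟨θ - 1, hidx⟩ := by
    rw [hv]; unfold nthSmallest; exact List.getD_eq_get (l := l) (d := 0) ⟨θ - 1, hidx⟩
  have hsorted : l.Pairwise (· ≤ ·) := Multiset.pairwise_sort (s := s) (r := (· ≤ ·))
  -- rewrite the multiset filter as a list filter
  have hcoe : s.filter (fun x => x < v) = ↑(l.filter (fun x => decide (x < v))) := by
    conv_lhs => rw [← Multiset.sort_eq (s := s) (r := (· ≤ ·)), ← hl]
    simp [Multiset.filter_coe]
  rw [hcoe, Multiset.coe_card]
  -- split the list
  have hsplit : l = l.take (θ - 1) ++ l.drop (θ - 1) := (List.take_append_drop _ l).symm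
  have hdropnil : (l.drop (θ - 1)).filter (fun x => decide (x < v)) = [] := by
    rw [List.filter_eq_nil_iff]
    intro x hx
    simp only [decide_eq_true_eq, not_lt]
    obtain ⟨⟨k, hk⟩, hget⟩ := List.mem_iff_get.1 hx
    have hk' : θ - 1 + k < l.length := by
      have : (l.drop (θ - 1)).length = l.length - (θ - 1) := List.length_drop
      omega
    have hgd : (l.drop (θ - 1)).get ⟨k, hk⟩ = l.get ⟨θ - 1 + k, hk'⟩ := by
      simp [List.getElem_drop]
    have hrel : l.get ⟨θ - 1, hidx⟩ ≤ l.get ⟨θ - 1 + k, hk'⟩ :=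
      hsorted.rel_get_of_le (Fin.mk_le_mk.2 (Nat.le_add_right _ _))
    rw [hvget, ← hget, hgd]
    exact hrel
  calc (l.filter (fun x => decide (x < v))).length
      = ((l.take (θ - 1) ++ l.drop (θ - 1)).filter (fun x => decide (x < v))).length := by
        rw [← hsplit]
    _ = ((l.take (θ - 1)).filter _).length + ((l.drop (θ - 1)).filter _).length := by
        rw [List.filter_append, List.length_append]
    _ ≤ (θ - 1) + 0 := by
        apply Nat.add_le_add
        · exact le_trans (List.length_filter_le _ _) (by simp [List.length_take])
        · rw [hdropnil]; simp
    _ = θ - 1 := by omega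

/-- Unfolding `stream` at position `j*mdeg + l`. -/
lemma stream_apply {F : Type*} [Field F] {L : ℕ} {mdeg : ℕ} (hm : 0 < mdeg)
    (m : Fin L → Polynomial F) (c : Polynomial F) (j : Fin L) (l : ℕ) (hl : l < mdeg)
    (hp : (j : ℕ) * mdeg + l < L * mdeg) :
    stream mdeg m c ⟨(j : ℕ) * mdeg + l, hp⟩ = (c %ₘ m j).coeff l := by
  have h1 : ((j : ℕ) * mdeg + l) / mdeg = (j : ℕ) := by
    rw [mul_comm, Nat.mul_add_div hm, Nat.div_eq_of_lt hl, add_zero]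
  have h2 : ((j : ℕ) * mdeg + l) % mdeg = l := by
    rw [mul_comm, Nat.mul_add_mod, Nat.mod_eq_of_lt hl]
  unfold stream
  have h3 : ∀ (pf : ((j : ℕ) * mdeg + l) / mdeg < L),
      (⟨((j : ℕ) * mdeg + l) / mdeg, pf⟩ : Fin L) = j := fun pf => Fin.ext h1
  simp only [Fin.val_mk] at *
  rw [h3, h2]

theorem stmt13 {F : Type*} [Field F] {L : ℕ} (hL : 2 ≤ L)
    (m : Fin L → Polynomial F)
    (hmonic : ∀ i, (m i).Monic)
    (hdist : Function.Injective m)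
    (hdeg : ∀ i, 0 < (m i).degree)
    (hm_lt : ∀ i, (m i).degree < (Finset.univ.lcm m).degree)
    (mdeg : ℕ) (hmdeg : 1 ≤ mdeg)
    (hsamedeg : ∀ i, (m i).natDegree = mdeg)
    (d : ℕ) (hd : d = codeDist Finset.univ m)
    (A : ℕ) (hA : A = (d - 1) / 2)
    (θ : ℕ) (hθ1 : 1 ≤ θ) (hθ2 : θ ≤ L - 2 * A)
    (B : ℕ) (hB : B = (L - θ) / 2 - A)
    (tau : Fin L → ℕ)
    (htau : ∀ j, tau j = sInf {n | ∃ i, i ≠ j ∧ n = (gcd (m i) (m j)).natDegree})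
    (η : ℕ)
    (hη : η < nthSmallest (Finset.univ.val.map tau) θ)
    (hAB : B < A)
    (a b : Polynomial F)
    (ha : a.degree < (Finset.univ.lcm m).degree)
    (hb : b.degree < (Finset.univ.lcm m).degree)
    (r : Fin (L * mdeg) → F)
    (hra : DiffBursts r (stream mdeg m a) (B + (A - B) / 2) η)
    (hrb : DiffBursts r (stream mdeg m b) (B + (A - B) / 2) η) :
    a = b := by
  by_contra hne
  have hmpos : 0 < mdeg := hmdeg
  have hc0 : a - b ≠ 0 := sub_ne_zero.mpr hne
  have hcdeg : (a - b).degree < (Finset.univ.lcm m).degree :=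
    lt_of_le_of_lt (Polynomial.degree_sub_le a b) (max_lt ha hb)
  -- numerology
  have hA1 : 1 ≤ A := by omega
  have hd3 : 2 * A + 1 ≤ d := by omega
  -- the set of erroneous blocks
  set U : Finset (Fin L) := Finset.univ.filter (fun i => ¬ m i ∣ (a - b)) with hU
  have hdU : d ≤ U.card := by
    rw [hd]
    exact Nat.sInf_le ⟨a - b, hc0, hcdeg, rfl⟩
  -- window starts
  obtain ⟨Sa, hSa_card, hSa⟩ := hra
  obtain ⟨Sb, hSb_card, hSb⟩ := hrb
  set S : Finset ℕ := Sa ∪ Sb with hS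
  have hScard : S.card ≤ 2 * (B + (A - B) / 2) :=
    le_trans (Finset.card_union_le Sa Sb) (by omega)
  have hcover : ∀ p : Fin (L * mdeg), stream mdeg m a p ≠ stream mdeg m b p →
      ∃ t ∈ S, t ≤ (p : ℕ) ∧ (p : ℕ) < t + η := by
    intro p hp
    by_cases h1 : r p = stream mdeg m a p
    · have h2 : r p ≠ stream mdeg m b p := by rw [h1]; exact hp
      obtain ⟨t, ht, h⟩ := hSb p h2
      exact ⟨t, Finset.mem_union_right _ ht, h⟩
    · obtain ⟨t, ht, h⟩ := hSa p h1
      exact ⟨t, Finset.mem_union_left _ ht, h⟩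
  -- every nonzero coefficient of a block error is covered by a window
  have keyP : ∀ (j : Fin L) (l : ℕ), l < mdeg → ((a - b) %ₘ m j).coeff l ≠ 0 →
      ∃ t ∈ S, t ≤ (j : ℕ) * mdeg + l ∧ (j : ℕ) * mdeg + l < t + η := by
    intro j l hl hco
    have hlt : (j : ℕ) * mdeg + l < L * mdeg := by
      have hj : (j : ℕ) + 1 ≤ L := j.isLt
      calc (j : ℕ) * mdeg + l < (j : ℕ) * mdeg + mdeg := by omega
        _ = ((j : ℕ) + 1) * mdeg := by ring
        _ ≤ L * mdeg := Nat.mul_le_mul_right _ hj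
    have hstream : stream mdeg m a ⟨(j : ℕ) * mdeg + l, hlt⟩ ≠
        stream mdeg m b ⟨(j : ℕ) * mdeg + l, hlt⟩ := by
      rw [stream_apply hmpos m a j l hl hlt, stream_apply hmpos m b j l hl hlt]
      intro heq
      apply hco
      have : (a - b) %ₘ m j = a %ₘ m j - b %ₘ m j := Polynomial.sub_modByMonic a b (m j)
      rw [this, Polynomial.coeff_sub, heq, sub_self]
    obtain ⟨t, ht, h1, h2⟩ := hcover _ hstream
    exact ⟨t, ht, h1, h2⟩
  -- block errors are nonzero on U, with natDegree < mdeg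
  have hUerr : ∀ j ∈ U, (a - b) %ₘ m j ≠ 0 := by
    intro j hj
    rw [hU, Finset.mem_filter] at hj
    intro h0
    exact hj.2 ((Polynomial.modByMonic_eq_zero_iff_dvd (hmonic j)).1 h0)
  have hUnd : ∀ j : Fin L, (a - b) %ₘ m j ≠ 0 → ((a - b) %ₘ m j).natDegree < mdeg := by
    intro j hj
    have hdm := Polynomial.degree_modByMonic_lt (a - b) (hmonic j)
    have := Polynomial.natDegree_lt_natDegree hj hdm
    rwa [hsamedeg j] at this
  -- the θ-th smallest tau is < mdeg, hence η + 2 ≤ mdeg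
  have hvm : nthSmallest (Finset.univ.val.map tau) θ < mdeg := by
    set ms := Finset.univ.val.map tau with hms
    have hmscard : Multiset.card ms = L := by
      rw [hms, Multiset.card_map]
      simp
    set lst := ms.sort (· ≤ ·) with hlst
    have hlen : lst.length = L := by rw [hlst, Multiset.length_sort, hmscard]
    have hidx : θ - 1 < lst.length := by omega
    have hvget : nthSmallest ms θ = lst.get ⟨θ - 1, hidx⟩ := by
      unfold nthSmallest; exact List.getD_eq_get (l := lst) (d := 0) ⟨θ - 1, hidx⟩
    have hvmem : nthSmallest ms θ ∈ ms := by
      rw [hvget, ← Multiset.mem_sort (· ≤ ·), ← hlst]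
      exact List.get_mem lst _

    obtain ⟨j0, _, hj0⟩ := Multiset.mem_map.1 hvmem
    rw [← hj0, htau j0]
    -- pick i1 ≠ j0
    have hex : ∃ i1 : Fin L, i1 ≠ j0 := by
      rcases Nat.lt_or_ge 0 (j0 : ℕ) with h | h
      · exact ⟨⟨0, by omega⟩, by intro hcon; rw [Fin.ext_iff] at hcon; simp at hcon; omega⟩
      · refine ⟨⟨1, by omega⟩, ?_⟩
        intro hcon
        rw [Fin.ext_iff] at hcon
        simp at hcon
        omega
    obtain ⟨i1, hi1⟩ := hex
    have hle : sInf {n | ∃ i, i ≠ j0 ∧ n = (gcd (m i) (m j0)).natDegree} ≤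
        (gcd (m i1) (m j0)).natDegree := Nat.sInf_le ⟨i1, hi1, rfl⟩
    have hlt : (gcd (m i1) (m j0)).natDegree < mdeg := by
      have := gcd_natDegree_lt (hmonic i1) (hmonic j0)
        (fun h => hi1 (hdist h)) (by rw [hsamedeg, hsamedeg])
      rwa [hsamedeg i1] at this
    omega
  have hη2 : η + 2 ≤ mdeg := by omega
  -- crude bound : |U| ≤ 2 |S|
  have hUcard2S : U.card ≤ 2 * S.card := by
    have hsub : U.image (Fin.val) ⊆
        S.biUnion (fun t => ({t / mdeg, t / mdeg + 1} : Finset ℕ)) := by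
      intro x hx
      obtain ⟨j, hj, rfl⟩ := Finset.mem_image.1 hx
      have he := hUerr j hj
      have hnd := hUnd j he
      have hcoeff : ((a - b) %ₘ m j).coeff (((a - b) %ₘ m j).natDegree) ≠ 0 :=
        Polynomial.leadingCoeff_ne_zero.2 he
      obtain ⟨t, ht, h1, h2⟩ := keyP j _ hnd hcoeff
      set l := ((a - b) %ₘ m j).natDegree
      -- j = (j*mdeg + l)/mdeg, bounded between t/mdeg and t/mdeg+1
      have hjdiv : ((j : ℕ) * mdeg + l) / mdeg = (j : ℕ) := by
        rw [mul_comm, Nat.mul_add_div hmpos, Nat.div_eq_of_lt hnd, add_zero]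
      have hlow : t / mdeg ≤ (j : ℕ) := by
        rw [← hjdiv]; exact Nat.div_le_div_right h1
      have hhigh : (j : ℕ) < t / mdeg + 2 := by
        rw [← hjdiv]
        rw [Nat.div_lt_iff_lt_mul hmpos]
        have hmod := Nat.div_add_mod t mdeg
        have hmlt : t % mdeg < mdeg := Nat.mod_lt t hmpos
        set Q := mdeg * (t / mdeg) with hQ
        have : (t / mdeg + 2) * mdeg = Q + 2 * mdeg := by rw [hQ]; ring
        omega
      refine Finset.mem_biUnion.2 ⟨t, ht, ?_⟩
      simp only [Finset.mem_insert, Finset.mem_singleton]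
      omega
    have h1 : (U.image (Fin.val)).card = U.card :=
      Finset.card_image_of_injective U Fin.val_injective
    have h2 : (S.biUnion (fun t => ({t / mdeg, t / mdeg + 1} : Finset ℕ))).card ≤
        2 * S.card := by
      refine le_trans (Finset.card_biUnion_le) ?_
      calc ∑ t ∈ S, ({t / mdeg, t / mdeg + 1} : Finset ℕ).card
          ≤ ∑ _t ∈ S, 2 := by
            refine Finset.sum_le_sum ?_
            intro t _
            exact le_trans (Finset.card_insert_le _ _) (by simp)
        _ = 2 * S.card := by rw [Finset.sum_const, smul_eq_mul, mul_comm]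
    calc U.card = (U.image (Fin.val)).card := h1.symm
      _ ≤ _ := Finset.card_le_card hsub
      _ ≤ 2 * S.card := h2
  -- there are at least θ clean blocks
  have hKcard : θ ≤ (Finset.univ \ U).card := by
    have hcard : (Finset.univ \ U).card = L - U.card := by
      rw [Finset.card_sdiff_of_subset (Finset.subset_univ U), Finset.card_univ, Fintype.card_fin]
    omega
  -- every erroneous block is head-served
  have hUhead : ∀ j ∈ U, ∃ t ∈ S, t / mdeg = (j : ℕ) := by
    intro j hj
    by_contra hjtail
    push_neg at hjtail
    have he := hUerr j hj
    have hnd := hUnd j he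
    set e := (a - b) %ₘ m j with hedef
    have hcoeff : e.coeff e.natDegree ≠ 0 := Polynomial.leadingCoeff_ne_zero.2 he
    obtain ⟨t, ht, h1, h2⟩ := keyP j e.natDegree hnd hcoeff
    have htne : t / mdeg ≠ (j : ℕ) := hjtail t ht
    have hjdiv : ((j : ℕ) * mdeg + e.natDegree) / mdeg = (j : ℕ) := by
      rw [mul_comm, Nat.mul_add_div hmpos, Nat.div_eq_of_lt hnd, add_zero]
    have hlow : t / mdeg ≤ (j : ℕ) := by
      rw [← hjdiv]; exact Nat.div_le_div_right h1
    have htlt : t < (j : ℕ) * mdeg := by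
      rw [← Nat.div_lt_iff_lt_mul hmpos]
      omega
    -- so the error is concentrated in low coefficients
    have hnde : e.natDegree + 2 ≤ η := by
      set J := (j : ℕ) * mdeg with hJ
      omega
    -- hence every clean block has small tau
    have hsmall : ∀ i ∈ Finset.univ \ U, tau i < nthSmallest (Finset.univ.val.map tau) θ := by
      intro i hi
      have hidvd : m i ∣ (a - b) := by
        rw [Finset.mem_sdiff, hU, Finset.mem_filter] at hi
        by_contra hcon
        exact hi.2 ⟨Finset.mem_univ i, hcon⟩
      have hij : j ≠ i := by
        intro hcon
        rw [Finset.mem_sdiff] at hi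
        exact hi.2 (hcon ▸ hj)
      have hgdvd : gcd (m j) (m i) ∣ e := by
        have hd1 : gcd (m j) (m i) ∣ (a - b) := (gcd_dvd_right (m j) (m i)).trans hidvd
        have hd2 : gcd (m j) (m i) ∣ m j * ((a - b) /ₘ m j) :=
          (gcd_dvd_left (m j) (m i)).mul_right _
        have hrw : e = (a - b) - m j * ((a - b) /ₘ m j) :=
          Polynomial.modByMonic_eq_sub_mul_div (a - b) (m j)
        rw [hrw]
        exact dvd_sub hd1 hd2
      have hgle : (gcd (m j) (m i)).natDegree ≤ e.natDegree :=
        Polynomial.natDegree_le_of_dvd hgdvd he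
      have htaule : tau i ≤ (gcd (m j) (m i)).natDegree := by
        rw [htau i]
        exact Nat.sInf_le ⟨j, hij, rfl⟩
      omega
    -- count contradiction
    set v := nthSmallest (Finset.univ.val.map tau) θ with hv
    have hfilter : θ ≤ Multiset.card
        ((Finset.univ.val.map tau).filter (fun x => x < v)) := by
      have hsub : (Finset.univ \ U).val.map tau ≤ Finset.univ.val.map tau :=
        Multiset.map_le_map (Finset.val_le_iff.2 (Finset.subset_univ _))
      have hall : ((Finset.univ \ U).val.map tau).filter (fun x => x < v) =
          (Finset.univ \ U).val.map tau := by
        rw [Multiset.filter_eq_self]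
        intro x hx
        obtain ⟨i, hi, rfl⟩ := Multiset.mem_map.1 hx
        exact hsmall i hi
      calc θ ≤ (Finset.univ \ U).card := hKcard
        _ = Multiset.card ((Finset.univ \ U).val.map tau) := by rw [Multiset.card_map]; rfl
        _ = Multiset.card (((Finset.univ \ U).val.map tau).filter (fun x => x < v)) := by
            rw [hall]
        _ ≤ _ := Multiset.card_le_card (Multiset.filter_le_filter _ hsub)
    have hmscard : θ ≤ Multiset.card (Finset.univ.val.map tau) := by
      rw [Multiset.card_map]
      have : Multiset.card (Finset.univ : Finset (Fin L)).val = L := by simp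
      omega
    have := filter_lt_nthSmallest_card_le (Finset.univ.val.map tau) θ hθ1 hmscard
    rw [← hv] at this
    omega
  -- head-serving gives |U| ≤ |S|
  have hUS : U.card ≤ S.card := by
    have hsub : U.image (Fin.val) ⊆ S.image (fun t => t / mdeg) := by
      intro x hx
      obtain ⟨j, hj, rfl⟩ := Finset.mem_image.1 hx
      obtain ⟨t, ht, heq⟩ := hUhead j hj
      exact Finset.mem_image.2 ⟨t, ht, heq⟩
    calc U.card = (U.image (Fin.val)).card :=
          (Finset.card_image_of_injective U Fin.val_injective).symm
      _ ≤ (S.image (fun t => t / mdeg)).card := Finset.card_le_card hsub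
      _ ≤ S.card := Finset.card_image_le
  -- final contradiction
  omega
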